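/- For the nilpotent 2×2 matrix S₀ = [[0,1],[0,0]], the conformal range DW_BCK^ℝ(S₀) equals the elliptical disk {(x,z) : x²/(1/2) + (z+1/2)²/(1/4) ≤ 1}, equivalently x² + 2z² + 2z ≤ 0, whose boundary is an h-horocycle with asymptotic point (0,-1). -/

import Mathlib

lemma norm_sq_two (x : EuclideanSpace ℂ (Fin 2)) :
    ‖x‖^2 = Complex.normSq (x 0) + Complex.normSq (x 1) := by
  rw [EuclideanSpace.norm_sq_eq, Fin.sum_univ_two, Complex.sq_norm, Complex.sq_norm]

lemma toEuc_apply (x : EuclideanSpace ℂ (Fin 2)) (i : Fin 2) :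
    Matrix.toEuclideanLin !![(0 : ℂ), 1; 0, 0] x i = ![x 1, 0] i := by
  fin_cases i <;>
    simp [Matrix.toEuclideanLin_apply, Matrix.mulVec, dotProduct,
      Fin.sum_univ_two, Matrix.vecHead, Matrix.vecTail]

lemma inner_S0 (x : EuclideanSpace ℂ (Fin 2)) :
    (inner ℂ x (Matrix.toEuclideanLin !![(0 : ℂ), 1; 0, 0] x) : ℂ) =
      (starRingEnd ℂ) (x 0) * x 1 := by
  simp [PiLp.inner_apply, Fin.sum_univ_two, toEuc_apply x 0, toEuc_apply x 1,
    Matrix.vecHead, Matrix.vecTail, mul_comm]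

lemma normAx (x : EuclideanSpace ℂ (Fin 2)) :
    ‖(Matrix.toEuclideanLin !![(0 : ℂ), 1; 0, 0] x : EuclideanSpace ℂ (Fin 2))‖^2
      = Complex.normSq (x 1) := by
  rw [norm_sq_two, toEuc_apply x 0, toEuc_apply x 1]; simp

/-- The conformal range (real Davis–Wielandt shell) in the BCK model. -/
noncomputable def DWR (A : Matrix (Fin 2) (Fin 2) ℂ) : Set (ℝ × ℝ) :=
  {p : ℝ × ℝ | ∃ x : EuclideanSpace ℂ (Fin 2), x ≠ 0 ∧
      p = (2 * (inner ℂ x (Matrix.toEuclideanLin A x) : ℂ).re /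
            (‖Matrix.toEuclideanLin A x‖ ^ 2 + ‖x‖ ^ 2),
           (‖Matrix.toEuclideanLin A x‖ ^ 2 - ‖x‖ ^ 2) /
            (‖Matrix.toEuclideanLin A x‖ ^ 2 + ‖x‖ ^ 2))}

lemma main_eq : DWR !![(0 : ℂ), 1; 0, 0] =
    {p : ℝ × ℝ | p.1 ^ 2 + 2 * p.2 ^ 2 + 2 * p.2 ≤ 0} := by
  ext p
  simp only [DWR, Set.mem_setOf_eq]
  constructor
  · rintro ⟨x, hx, hp⟩
    rw [normAx, norm_sq_two, inner_S0] at hp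
    set N0 := Complex.normSq (x 0) with hN0
    set N1 := Complex.normSq (x 1) with hN1
    set R := ((starRingEnd ℂ) (x 0) * x 1).re with hR
    have hN0n : 0 ≤ N0 := Complex.normSq_nonneg _
    have hN1n : 0 ≤ N1 := Complex.normSq_nonneg _
    have hpos : 0 < N0 + N1 := by
      rcases lt_or_eq_of_le (by positivity : (0:ℝ) ≤ N0 + N1) with h | h
      · exact h
      · exfalso; apply hx
        have h0 : x 0 = 0 := by
          rw [← Complex.normSq_eq_zero]; nlinarith
        have h1 : x 1 = 0 := by
          rw [← Complex.normSq_eq_zero]; nlinarith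
        ext i; fin_cases i <;> simpa [h0, h1]
    have hD : 0 < N1 + (N0 + N1) := by linarith
    have hRsq : R ^ 2 ≤ N0 * N1 := by
      have := Complex.normSq_nonneg ((starRingEnd ℂ) (x 0) * x 1)
      have him : (((starRingEnd ℂ) (x 0) * x 1).im) ^ 2 ≥ 0 := sq_nonneg _
      have hns : Complex.normSq ((starRingEnd ℂ) (x 0) * x 1) = N0 * N1 := by
        rw [Complex.normSq_mul, Complex.normSq_conj]
      have : R ^ 2 + (((starRingEnd ℂ) (x 0) * x 1).im) ^ 2 = N0 * N1 := by
        rw [← hns, Complex.normSq_apply]; ring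
      nlinarith
    rw [hp]
    simp only
    have key : (2 * R / (N1 + (N0 + N1))) ^ 2
        + 2 * ((N1 - (N0 + N1)) / (N1 + (N0 + N1))) ^ 2
        + 2 * ((N1 - (N0 + N1)) / (N1 + (N0 + N1)))
        = (4 * R ^ 2 - 4 * N0 * N1) / (N1 + (N0 + N1)) ^ 2 := by
      field_simp; ring
    rw [key]
    apply div_nonpos_of_nonpos_of_nonneg
    · nlinarith
    · positivity
  · intro h
    obtain ⟨u, v⟩ := p
    simp only at h ⊢
    rcases eq_or_lt_of_le (by nlinarith [sq_nonneg u, sq_nonneg (v+1)] : v ≤ 0) with hv | hv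
    · -- v = 0, hence u = 0
      have hu : u = 0 := by nlinarith
      refine ⟨(WithLp.equiv 2 (Fin 2 → ℂ)).symm ![0, 1], ?_, ?_⟩
      · intro h0
        have := congrFun (congrArg (WithLp.equiv 2 (Fin 2 → ℂ)) h0) 1
        simp at this
      · rw [normAx, norm_sq_two, inner_S0]
        subst hv; subst hu
        have e0 : ((WithLp.equiv 2 (Fin 2 → ℂ)).symm ![(0:ℂ), 1] :
            EuclideanSpace ℂ (Fin 2)) 0 = 0 := rfl
        have e1 : ((WithLp.equiv 2 (Fin 2 → ℂ)).symm ![(0:ℂ), 1] :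
            EuclideanSpace ℂ (Fin 2)) 1 = 1 := rfl
        rw [e0, e1]
        norm_num [Prod.ext_iff]
    · -- v < 0
      set a := Real.sqrt (-v) with ha
      have hvn : (0:ℝ) < -v := by linarith
      have ha2 : a ^ 2 = -v := Real.sq_sqrt (le_of_lt hvn)
      have hap : 0 < a := Real.sqrt_pos.mpr hvn
      set r := u / (2 * a) with hr
      have hargn : 0 ≤ (1 + v) / 2 - u ^ 2 / (4 * (-v)) := by
        rw [sub_nonneg, div_le_div_iff₀ (by linarith) (by norm_num)]
        nlinarith
      set s := Real.sqrt ((1 + v) / 2 - u ^ 2 / (4 * (-v))) with hs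
      have hs2 : s ^ 2 = (1 + v) / 2 - u ^ 2 / (4 * (-v)) := Real.sq_sqrt hargn
      have hr2 : r ^ 2 = u ^ 2 / (4 * (-v)) := by
        rw [hr, div_pow]; rw [mul_pow, ha2]; ring_nf
      refine ⟨(WithLp.equiv 2 (Fin 2 → ℂ)).symm ![(a : ℂ), ⟨r, s⟩], ?_, ?_⟩
      · intro h0
        have := congrFun (congrArg (WithLp.equiv 2 (Fin 2 → ℂ)) h0) 0
        simp at this
        exact absurd this (ne_of_gt hap)
      · rw [normAx, norm_sq_two, inner_S0]
        have e0 : ((WithLp.equiv 2 (Fin 2 → ℂ)).symm ![(a : ℂ), ⟨r, s⟩] :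
            EuclideanSpace ℂ (Fin 2)) 0 = (a : ℂ) := rfl
        have e1 : ((WithLp.equiv 2 (Fin 2 → ℂ)).symm ![(a : ℂ), ⟨r, s⟩] :
            EuclideanSpace ℂ (Fin 2)) 1 = ⟨r, s⟩ := rfl
        rw [e0, e1]
        have hn0 : Complex.normSq (a : ℂ) = -v := by
          rw [Complex.normSq_ofReal, ← ha2]; ring
        have hn1 : Complex.normSq (⟨r, s⟩ : ℂ) = (1 + v) / 2 := by
          rw [Complex.normSq_mk]; nlinarith
        have hre : ((starRingEnd ℂ) (a : ℂ) * ⟨r, s⟩).re = u / 2 := by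
          simp [Complex.mul_re, Complex.ofReal_re, Complex.ofReal_im, hr]
          field_simp
        rw [hn0, hn1, hre]
        have hden : (1+v)/2 + (-v+(1+v)/2) = 1 := by ring
        rw [hden]
        simp only [Prod.mk.injEq]
        constructor <;> ring

theorem DWR_S0 :
    DWR !![(0 : ℂ), 1; 0, 0] =
      {p : ℝ × ℝ | p.1 ^ 2 / (1 / 2) + (p.2 + 1 / 2) ^ 2 / (1 / 4) ≤ 1} ∧
    DWR !![(0 : ℂ), 1; 0, 0] =
      {p : ℝ × ℝ | p.1 ^ 2 + 2 * p.2 ^ 2 + 2 * p.2 ≤ 0} ∧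
    ∃ c : ℝ, 0 < c ∧
      {p : ℝ × ℝ | p.1 ^ 2 + 2 * p.2 ^ 2 + 2 * p.2 = 0} =
        {p : ℝ × ℝ | p.1 ^ 2 + p.2 ^ 2 - 1 + c * (p.2 + 1) ^ 2 = 0} := by
  refine ⟨?_, main_eq, 1, one_pos, ?_⟩
  · rw [main_eq]
    ext p
    simp only [Set.mem_setOf_eq]
    constructor <;> intro h <;> nlinarith
  · ext p
    simp only [Set.mem_setOf_eq]
    constructor <;> intro h <;> nlinarith
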